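/- If φ: S → S' is a graph isomorphism from the graph of a medium (S, T) onto the graph of a medium (S', T'), then there exists a bijection β: T → T' such that (φ, β) is an isomorphism of media. -/

import Mathlib

variable {S : Type*}

/-- Result of applying message `m` (a list of tokens) to state `P`. -/
def mApply (m : List (S → S)) (P : S) : S := m.foldl (fun s τ => τ s) P

/-- `τ'` is a reverse of `τ`. -/
def IsReverse (τ τ' : S → S) : Prop := ∀ P Q : S, P ≠ Q → (τ P = Q ↔ τ' Q = P)

/-- `(S, T)` is a token system. -/
def IsTokenSystem (T : Set (S → S)) : Prop :=
  Nontrivial S ∧ T.Nonempty ∧ ∀ τ ∈ T, τ ≠ id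

/-- `m` is a message of the token system with token set `T`. -/
def IsMsg (T : Set (S → S)) (m : List (S → S)) : Prop := ∀ τ ∈ m, τ ∈ T

/-- `m` is stepwise effective for `P`. -/
def StepwiseEff : List (S → S) → S → Prop
  | [], _ => True
  | τ :: rest, P => τ P ≠ P ∧ StepwiseEff rest (τ P)

/-- `m` is consistent: it contains no token together with a reverse of it. -/
def Consistent (m : List (S → S)) : Prop :=
  ∀ τ ∈ m, ∀ τ' ∈ m, ¬ IsReverse τ τ'

/-- `m` is concise for `P`. -/
def Concise (T : Set (S → S)) (m : List (S → S)) (P : S) : Prop :=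
  IsMsg T m ∧ Consistent m ∧ StepwiseEff m P ∧ m.Nodup

/-- `m` is a return message for `P`. -/
def IsReturn (m : List (S → S)) (P : S) : Prop :=
  StepwiseEff m P ∧ mApply m P = P

/-- `m` is vacuous: its indices partition into pairs of mutually reverse tokens. -/
def Vacuous (m : List (S → S)) : Prop :=
  ∃ σ : Equiv.Perm (Fin m.length),
    (∀ i, σ i ≠ i) ∧ (∀ i, σ (σ i) = i) ∧
    ∀ i, IsReverse (m.get i) (m.get (σ i))

/-- `(S, T)` is a medium: token system satisfying [Ma] and [Mb]. -/
def IsMedium (T : Set (S → S)) : Prop :=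
  IsTokenSystem T ∧
  (∀ P Q : S, P ≠ Q → ∃ m, Concise T m P ∧ mApply m P = Q) ∧
  (∀ (m : List (S → S)) (P : S), IsMsg T m → IsReturn m P → Vacuous m)

/-- Content of a message: its set of tokens. -/
def msgContent (m : List (S → S)) : Set (S → S) := {τ | τ ∈ m}

/-- Token content of a state `P`. -/
def SContent (T : Set (S → S)) (P : S) : Set (S → S) :=
  {τ | ∃ (V : S) (m : List (S → S)), Concise T m V ∧ mApply m V = P ∧ τ ∈ m}

/-- `mr` is the reverse message `τ̃ₙ…τ̃₁` of `m = τ₁…τₙ`. -/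
def IsReverseOfMsg (m mr : List (S → S)) : Prop :=
  List.Forall₂ (fun τ τ' => IsReverse τ τ' ∧ IsReverse τ' τ) m mr.reverse

/-- The graph of a medium: states are vertices, token-adjacent states are joined. -/
def mediumGraph (T : Set (S → S)) : SimpleGraph S where
  Adj P Q := P ≠ Q ∧ ∃ τ ∈ T, τ P = Q ∨ τ Q = P
  symm := by
    constructor
    rintro P Q ⟨h, τ, hτ, hor⟩
    exact ⟨h.symm, τ, hτ, hor.symm⟩
  loopless := by
    constructor
    rintro P ⟨h, -⟩
    exact h rfl

variable {V : Type*}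

/-- The like relation on arcs of a graph:
`ab L cd` iff `d(a,c) + 1 = d(b,d) + 1 = d(a,d) = d(b,c)`. -/
def Like (G : SimpleGraph V) (a b c d : V) : Prop :=
  G.Adj a b ∧ G.Adj c d ∧
    G.dist a c + 1 = G.dist b d + 1 ∧ G.dist b d + 1 = G.dist a d ∧
    G.dist a d = G.dist b c

/-- A graph is mediatic if it is connected, bipartite, and its like relation is transitive. -/
def IsMediatic (G : SimpleGraph V) : Prop :=
  G.Connected ∧ G.Colorable 2 ∧
    ∀ a b c d e f : V, Like G a b c d → Like G c d e f → Like G a b e f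

namespace MediaAux

open List

theorem isReverse_symm {τ τ' : S → S} (h : IsReverse τ τ') : IsReverse τ' τ :=
  fun P Q hPQ => (h Q P (Ne.symm hPQ)).symm

theorem isReverse_unique {τ a b : S → S} (ha : IsReverse τ a) (hb : IsReverse τ b) : a = b := by
  have key : ∀ (a b : S → S), IsReverse τ a → IsReverse τ b → ∀ Q, a Q ≠ Q → a Q = b Q := by
    intro a b ha hb Q hQ
    have h1 : τ (a Q) = Q := (ha (a Q) Q hQ).mpr rfl
    exact ((hb (a Q) Q hQ).mp h1).symm
  funext Q
  by_cases h : a Q = Q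
  · by_cases h' : b Q = Q
    · rw [h, h']
    · exact (key b a hb ha Q h').symm
  · exact key a b ha hb Q h

@[simp] theorem mApply_nil (P : S) : mApply ([] : List (S → S)) P = P := rfl

@[simp] theorem mApply_cons (τ : S → S) (m : List (S → S)) (P : S) :
    mApply (τ :: m) P = mApply m (τ P) := rfl

@[simp] theorem mApply_append (m n : List (S → S)) (P : S) :
    mApply (m ++ n) P = mApply n (mApply m P) := by
  simp [mApply, List.foldl_append]

@[simp] theorem stepwiseEff_nil (P : S) : StepwiseEff ([] : List (S → S)) P := trivial

theorem stepwiseEff_cons {τ : S → S} {m : List (S → S)} {P : S} :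
    StepwiseEff (τ :: m) P ↔ τ P ≠ P ∧ StepwiseEff m (τ P) := Iff.rfl

theorem stepwiseEff_append {m n : List (S → S)} {P : S} :
    StepwiseEff (m ++ n) P ↔ StepwiseEff m P ∧ StepwiseEff n (mApply m P) := by
  induction m generalizing P with
  | nil => simp
  | cons τ rest ih => simp [stepwiseEff_cons, ih, and_assoc]

theorem two_le_count_of_get {α : Type*} [DecidableEq α] {l : List α} {v : α}
    {i j : Fin l.length} (hij : i ≠ j) (hi : l.get i = v) (hj : l.get j = v) :
    2 ≤ l.count v := by
  have key : ∀ (i j : ℕ) (hi : i < l.length) (hj : j < l.length), i < j →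
      l[i] = v → l[j] = v → 2 ≤ l.count v := by
    intro i j hi hj hlt hvi hvj
    have h1 : v ∈ l.take j := by
      have : (l.take j)[i]'(by simp [hj]; omega) = l[i] := List.getElem_take
      rw [← hvi, ← this]; exact List.getElem_mem _
    have h2 : v ∈ l.drop j := by
      have : (l.drop j)[0]'(by simp [hj]) = l[j + 0] := List.getElem_drop ..
      simp only [Nat.add_zero] at this
      rw [← hvj, ← this]; exact List.getElem_mem _
    calc 2 = 1 + 1 := rfl
    _ ≤ (l.take j).count v + (l.drop j).count v :=
        Nat.add_le_add (List.count_pos_iff.mpr h1) (List.count_pos_iff.mpr h2)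
    _ = l.count v := by rw [← List.count_append, List.take_append_drop]
  rcases lt_or_gt_of_ne (Fin.val_ne_of_ne hij) with h | h
  · exact key i.1 j.1 i.2 j.2 h (by simpa using hi) (by simpa using hj)
  · exact key j.1 i.1 j.2 i.2 h (by simpa using hj) (by simpa using hi)

end MediaAux
namespace MediaAux

open List

open Classical in
noncomputable def revOf (τ : S → S) : S → S :=
  if h : ∃ τ', IsReverse τ τ' then h.choose else id

theorem revOf_eq {τ x : S → S} (h : IsReverse τ x) : revOf τ = x := by
  have he : ∃ τ', IsReverse τ τ' := ⟨x, h⟩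
  simp only [revOf]
  rw [dif_pos he]
  exact isReverse_unique he.choose_spec h

variable {T : Set (S → S)}

theorem exists_ne (hM : IsMedium T) {τ : S → S} (hτ : τ ∈ T) : ∃ P, τ P ≠ P := by
  by_contra h
  push_neg at h
  exact hM.1.2.2 τ hτ (funext h)

theorem exists_reverse (hM : IsMedium T) {τ : S → S} (hτ : τ ∈ T) :
    ∃ τ' ∈ T, IsReverse τ τ' := by
  obtain ⟨P, hP⟩ := exists_ne hM hτ
  obtain ⟨m, hm, hmQ⟩ := hM.2.1 (τ P) P (Ne.symm (fun h => hP h.symm))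
  have hmsg : IsMsg T (τ :: m) := by
    intro x hx
    rcases List.mem_cons.mp hx with h | h
    · exact h ▸ hτ
    · exact hm.1 x h
  have hret : IsReturn (τ :: m) P := by
    refine ⟨⟨hP, hm.2.2.1⟩, ?_⟩
    rw [mApply_cons, hmQ]
  obtain ⟨σ, hne, -, hrev⟩ := hM.2.2 (τ :: m) P hmsg hret
  have hlen : 0 < (τ :: m).length := by simp
  set i0 : Fin (τ :: m).length := ⟨0, hlen⟩
  have h0 : (τ :: m).get i0 = τ := rfl
  refine ⟨(τ :: m).get (σ i0), hmsg _ (List.mem_iff_get.mpr ⟨σ i0, rfl⟩), ?_⟩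
  have := hrev i0
  rwa [h0] at this

theorem isReverse_revOf (hM : IsMedium T) {τ : S → S} (hτ : τ ∈ T) :
    IsReverse τ (revOf τ) := by
  obtain ⟨τ', _, h⟩ := exists_reverse hM hτ
  rw [revOf_eq h]; exact h

theorem revOf_mem (hM : IsMedium T) {τ : S → S} (hτ : τ ∈ T) : revOf τ ∈ T := by
  obtain ⟨τ', hT, h⟩ := exists_reverse hM hτ
  rw [revOf_eq h]; exact hT

theorem revOf_apply (hM : IsMedium T) {τ : S → S} (hτ : τ ∈ T) {P Q : S}
    (hne : P ≠ Q) (h : τ P = Q) : revOf τ Q = P :=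
  (isReverse_revOf hM hτ P Q hne).mp h

theorem revOf_revOf (hM : IsMedium T) {τ : S → S} (hτ : τ ∈ T) : revOf (revOf τ) = τ :=
  revOf_eq (isReverse_symm (isReverse_revOf hM hτ))

theorem revOf_inj (hM : IsMedium T) {τ₁ τ₂ : S → S} (h1 : τ₁ ∈ T) (h2 : τ₂ ∈ T)
    (h : revOf τ₁ = revOf τ₂) : τ₁ = τ₂ := by
  rw [← revOf_revOf hM h1, h, revOf_revOf hM h2]

theorem not_self_reverse (hM : IsMedium T) {τ : S → S} (hτ : τ ∈ T) : ¬ IsReverse τ τ := by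
  intro h
  obtain ⟨P, hP⟩ := exists_ne hM hτ
  have hPQ : P ≠ τ P := fun e => hP e.symm
  have hQP : τ (τ P) = P := (h P (τ P) hPQ).mp rfl
  obtain ⟨m, hm, hmQ⟩ := hM.2.1 P (τ P) hPQ
  set R := m ++ [τ] with hR
  have hmsg : IsMsg T R := by
    intro x hx
    rcases List.mem_append.mp hx with hx | hx
    · exact hm.1 x hx
    · simp at hx; exact hx ▸ hτ
  have heff : τ (τ P) ≠ τ P := by
    rw [hQP]; exact hPQ
  have hret : IsReturn R P := by
    constructor
    · rw [hR, stepwiseEff_append, hmQ]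
      exact ⟨hm.2.2.1, heff, trivial⟩
    · rw [hR, mApply_append, hmQ]
      simpa using hQP
  obtain ⟨σ, hne, -, hrev⟩ := hM.2.2 R P hmsg hret
  have hlen : m.length < R.length := by simp [hR]
  set j : Fin R.length := ⟨m.length, hlen⟩
  have hj : R.get j = τ := by
    simp only [List.get_eq_getElem, hR]
    rw [List.getElem_append_right (le_refl _)]
    simp
  have hpj : R.get (σ j) = τ := by
    have := hrev j
    rw [hj] at this
    exact (isReverse_unique this h)
  have hlt : (σ j).1 < m.length := by
    have h1 : (σ j).1 ≠ m.length := fun e => hne j (Fin.ext e)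
    have h2 := (σ j).2
    simp only [hR, List.length_append, List.length_cons, List.length_nil] at h2
    omega
  have hτm : τ ∈ m := by
    have h3 : R.get (σ j) = m[(σ j).1]'hlt := by
      simp only [List.get_eq_getElem, hR]
      exact List.getElem_append_left hlt
    rw [hpj] at h3
    have hmem : m[(σ j).1]'hlt ∈ m := List.getElem_mem hlt
    rwa [← h3] at hmem
  exact hm.2.1 τ hτm τ hτm h

theorem revOf_ne_self (hM : IsMedium T) {τ : S → S} (hτ : τ ∈ T) : revOf τ ≠ τ := by
  intro e
  have h := isReverse_revOf hM hτ
  rw [e] at h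
  exact not_self_reverse hM hτ h

end MediaAux
namespace MediaAux

open List

variable {T : Set (S → S)}

noncomputable def revMsg (m : List (S → S)) : List (S → S) := (m.map revOf).reverse

@[simp] theorem revMsg_nil : revMsg ([] : List (S → S)) = [] := rfl

theorem revMsg_cons (τ : S → S) (m : List (S → S)) :
    revMsg (τ :: m) = revMsg m ++ [revOf τ] := by
  simp [revMsg]

theorem mem_revMsg {x : S → S} {m : List (S → S)} :
    x ∈ revMsg m ↔ ∃ ν ∈ m, revOf ν = x := by
  simp [revMsg]

theorem revMsg_isMsg (hM : IsMedium T) {m : List (S → S)} (h : IsMsg T m) :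
    IsMsg T (revMsg m) := by
  intro x hx
  obtain ⟨ν, hν, rfl⟩ := mem_revMsg.mp hx
  exact revOf_mem hM (h ν hν)

theorem revMsg_run (hM : IsMedium T) {m : List (S → S)} {P : S}
    (hmsg : IsMsg T m) (heff : StepwiseEff m P) :
    StepwiseEff (revMsg m) (mApply m P) ∧ mApply (revMsg m) (mApply m P) = P := by
  induction m generalizing P with
  | nil => simp
  | cons τ rest ih =>
    obtain ⟨h1, h2⟩ := heff
    have hτ : τ ∈ T := hmsg τ (List.mem_cons_self)
    have hrest : IsMsg T rest := fun x hx => hmsg x (List.mem_cons_of_mem _ hx)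
    obtain ⟨ih1, ih2⟩ := ih hrest h2
    have hback : revOf τ (τ P) = P := revOf_apply hM hτ (Ne.symm h1) rfl
    constructor
    · rw [revMsg_cons, mApply_cons, stepwiseEff_append, ih2]
      refine ⟨ih1, ?_, trivial⟩
      rw [hback]
      exact Ne.symm h1
    · rw [revMsg_cons, mApply_cons, mApply_append, ih2]
      simpa using hback

theorem revMsg_nodup (hM : IsMedium T) {m : List (S → S)} (hmsg : IsMsg T m)
    (h : m.Nodup) : (revMsg m).Nodup := by
  rw [revMsg, List.nodup_reverse]
  exact h.map_on (fun x hx y hy hxy => revOf_inj hM (hmsg x hx) (hmsg y hy) hxy)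

theorem revMsg_consistent (hM : IsMedium T) {m : List (S → S)} (hmsg : IsMsg T m)
    (h : Consistent m) : Consistent (revMsg m) := by
  intro x hx y hy hrev
  obtain ⟨ν₁, hν₁, rfl⟩ := mem_revMsg.mp hx
  obtain ⟨ν₂, hν₂, rfl⟩ := mem_revMsg.mp hy
  have hr1 : IsReverse (revOf ν₁) ν₁ := isReverse_symm (isReverse_revOf hM (hmsg ν₁ hν₁))
  have : ν₁ = revOf ν₂ := isReverse_unique hr1 hrev
  have : IsReverse ν₂ ν₁ := this ▸ isReverse_revOf hM (hmsg ν₂ hν₂)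
  exact h ν₂ hν₂ ν₁ hν₁ this

theorem concise_exists (hM : IsMedium T) (P Q : S) :
    ∃ m, Concise T m P ∧ mApply m P = Q := by
  by_cases h : P = Q
  · exact ⟨[], ⟨fun x hx => absurd hx List.not_mem_nil,
      fun x hx => absurd hx List.not_mem_nil, trivial, List.nodup_nil⟩, h ▸ rfl⟩
  · exact hM.2.1 P Q h

theorem revMsg_concise (hM : IsMedium T) {m : List (S → S)} {P : S}
    (hm : Concise T m P) : Concise T (revMsg m) (mApply m P) :=
  ⟨revMsg_isMsg hM hm.1, revMsg_consistent hM hm.1 hm.2.1,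
    (revMsg_run hM hm.1 hm.2.2.1).1, revMsg_nodup hM hm.1 hm.2.2.2⟩

end MediaAux
namespace MediaAux

open List

variable {T : Set (S → S)}

/-- The content of a concise message is contained in the content of any
stepwise effective message with the same endpoints. -/
theorem concise_subset_eff (hM : IsMedium T) {m n : List (S → S)} {P : S}
    (hm : Concise T m P) (hn : IsMsg T n) (hnS : StepwiseEff n P)
    (hnX : mApply n P = mApply m P) : ∀ τ ∈ m, τ ∈ n := by
  intro τ hτ
  set R := m ++ revMsg n with hR
  obtain ⟨hrun1, hrun2⟩ := revMsg_run hM hn hnS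
  have hmsg : IsMsg T R := by
    intro x hx
    rcases List.mem_append.mp hx with hx | hx
    · exact hm.1 x hx
    · exact revMsg_isMsg hM hn x hx
  have hret : IsReturn R P := by
    constructor
    · rw [hR, stepwiseEff_append]
      exact ⟨hm.2.2.1, hnX ▸ hrun1⟩
    · rw [hR, mApply_append, ← hnX]
      exact hrun2
  obtain ⟨σ, hne, -, hrev⟩ := hM.2.2 R P hmsg hret
  have hτR : τ ∈ R := List.mem_append.mpr (Or.inl hτ)
  obtain ⟨i, hi⟩ := List.mem_iff_get.mp hτR
  have hpart := hrev i
  rw [hi] at hpart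
  set w := R.get (σ i) with hw
  have hwR : w ∈ R := List.mem_iff_get.mpr ⟨σ i, rfl⟩
  rcases List.mem_append.mp hwR with hwm | hwn
  · exact absurd hpart (hm.2.1 τ hτ w hwm)
  · obtain ⟨ν, hν, hνw⟩ := mem_revMsg.mp hwn
    have h1 : IsReverse w τ := isReverse_symm hpart
    have h2 : IsReverse w ν := by
      rw [← hνw]
      exact isReverse_symm (isReverse_revOf hM (hn ν hν))
    rw [isReverse_unique h1 h2]
    exact hν

theorem adj_eff (hM : IsMedium T) {τ : S → S} (hτ : τ ∈ T) {P : S} (h : τ P ≠ P) :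
    (mediumGraph T).Adj P (τ P) :=
  ⟨Ne.symm h, τ, hτ, Or.inl rfl⟩

theorem arc_token (hM : IsMedium T) {P Q : S} (h : (mediumGraph T).Adj P Q) :
    ∃ τ ∈ T, τ P = Q := by
  obtain ⟨hne, τ, hτ, hor | hor⟩ := h
  · exact ⟨τ, hτ, hor⟩
  · refine ⟨revOf τ, revOf_mem hM hτ, ?_⟩
    exact revOf_apply hM hτ (Ne.symm hne) hor

theorem msg_walk (hM : IsMedium T) {m : List (S → S)} {P : S}
    (hmsg : IsMsg T m) (heff : StepwiseEff m P) :
    ∃ w : (mediumGraph T).Walk P (mApply m P), w.length = m.length := by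
  induction m generalizing P with
  | nil => exact ⟨SimpleGraph.Walk.nil, rfl⟩
  | cons τ rest ih =>
    obtain ⟨h1, h2⟩ := heff
    obtain ⟨w, hw⟩ := ih (fun x hx => hmsg x (List.mem_cons_of_mem _ hx)) h2
    exact ⟨SimpleGraph.Walk.cons (adj_eff hM (hmsg τ (List.mem_cons_self)) h1) w,
      by simp [hw]⟩

theorem walk_msg (hM : IsMedium T) {P X : S} (w : (mediumGraph T).Walk P X) :
    ∃ c, IsMsg T c ∧ StepwiseEff c P ∧ mApply c P = X ∧ c.length = w.length := by
  induction w with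
  | nil => exact ⟨[], fun x hx => absurd hx List.not_mem_nil, trivial, rfl, rfl⟩
  | cons h w ih =>
    rename_i u v x
    obtain ⟨σ, hσ, hσv⟩ := arc_token hM h
    obtain ⟨c, hc1, hc2, hc3, hc4⟩ := ih
    refine ⟨σ :: c, ?_, ?_, ?_, ?_⟩
    · intro y hy
      rcases List.mem_cons.mp hy with hy | hy
      · exact hy ▸ hσ
      · exact hc1 y hy
    · refine ⟨?_, ?_⟩
      · rw [hσv]; exact h.ne'
      · rw [hσv]; exact hc2
    · rw [mApply_cons, hσv]; exact hc3
    · simp [hc4]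

theorem medium_connected (hM : IsMedium T) : (mediumGraph T).Connected := by
  have : Nontrivial S := hM.1.1
  rw [SimpleGraph.connected_iff]
  refine ⟨fun P Q => ?_, by infer_instance⟩
  by_cases h : P = Q
  · exact h ▸ SimpleGraph.Reachable.refl P
  · obtain ⟨m, hm, hmQ⟩ := hM.2.1 P Q h
    obtain ⟨w, -⟩ := msg_walk hM hm.1 hm.2.2.1
    exact ⟨hmQ ▸ w⟩

/-- The length of a concise message equals the graph distance of its endpoints. -/
theorem concise_length (hM : IsMedium T) {m : List (S → S)} {P : S}
    (hm : Concise T m P) : m.length = (mediumGraph T).dist P (mApply m P) := by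
  classical
  refine le_antisymm ?_ ?_
  · obtain ⟨w, hw⟩ := (medium_connected hM).exists_walk_length_eq_dist P (mApply m P)
    obtain ⟨c, hc1, hc2, hc3, hc4⟩ := walk_msg hM w
    have hsub : ∀ τ ∈ m, τ ∈ c := concise_subset_eff hM hm hc1 hc2 hc3
    have h1 : m.length = m.toFinset.card := (List.toFinset_card_of_nodup hm.2.2.2).symm
    have h2 : m.toFinset ⊆ c.toFinset := by
      intro x hx
      rw [List.mem_toFinset] at hx ⊢
      exact hsub x hx
    calc m.length = m.toFinset.card := h1
      _ ≤ c.toFinset.card := Finset.card_le_card h2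
      _ ≤ c.length := List.toFinset_card_le c
      _ = (mediumGraph T).dist P (mApply m P) := by rw [hc4, hw]
  · obtain ⟨w, hw⟩ := msg_walk hM hm.1 hm.2.2.1
    rw [← hw]
    exact SimpleGraph.dist_le w

end MediaAux
namespace MediaAux

open List

variable {T : Set (S → S)}

/-- In a vacuous return, two distinct positions holding the same token `τ` force
at least two occurrences of its reverse. -/
theorem partner_count (hM : IsMedium T) [DecidableEq (S → S)] {R : List (S → S)} {P : S}
    (hmsg : IsMsg T R) (hret : IsReturn R P) {τ : S → S}
    {i₁ i₂ : Fin R.length} (h12 : i₁ ≠ i₂)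
    (h1 : R.get i₁ = τ) (h2 : R.get i₂ = τ) : 2 ≤ R.count (revOf τ) := by
  obtain ⟨σ, hne, -, hrev⟩ := hM.2.2 R P hmsg hret
  have hp1 := hrev i₁
  have hp2 := hrev i₂
  rw [h1] at hp1
  rw [h2] at hp2
  have hv1 : R.get (σ i₁) = revOf τ := (revOf_eq hp1).symm
  have hv2 : R.get (σ i₂) = revOf τ := (revOf_eq hp2).symm
  exact two_le_count_of_get (fun e => h12 (σ.injective e)) hv1 hv2

/-- [S1] A token occurring in a concise message is ineffective at the endpoint. -/
theorem mem_concise_fix (hM : IsMedium T) {m : List (S → S)} {V : S} {τ : S → S}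
    (hm : Concise T m V) (hτm : τ ∈ m) : τ (mApply m V) = mApply m V := by
  classical
  by_contra hY
  set W := mApply m V with hW
  have hτT : τ ∈ T := hm.1 τ hτm
  have hrevm : revOf τ ∉ m := by
    intro h
    exact hm.2.1 τ hτm (revOf τ) h (isReverse_revOf hM hτT)
  have hcm : m.count (revOf τ) = 0 := List.count_eq_zero.mpr hrevm
  have hτne : revOf τ ≠ τ := revOf_ne_self hM hτT
  obtain ⟨k, hkval⟩ := List.mem_iff_get.mp hτm
  by_cases hVY : τ W = V
  · set R := m ++ [τ] with hR
    have hmsg : IsMsg T R := by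
      intro x hx
      rcases List.mem_append.mp hx with hx | hx
      · exact hm.1 x hx
      · simp at hx; exact hx ▸ hτT
    have hret : IsReturn R V := by
      constructor
      · rw [hR, stepwiseEff_append, ← hW]
        exact ⟨hm.2.2.1, hY, trivial⟩
      · rw [hR, mApply_append, ← hW]
        simpa using hVY
    have hlen : R.length = m.length + 1 := by simp [hR]
    set i₁ : Fin R.length := ⟨k.1, by rw [hlen]; omega⟩ with hi₁
    set i₂ : Fin R.length := ⟨m.length, by rw [hlen]; omega⟩ with hi₂
    have hv₁ : R.get i₁ = τ := by
      simp only [List.get_eq_getElem, hi₁, hR]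
      rw [List.getElem_append_left k.2]
      simpa using hkval
    have hv₂ : R.get i₂ = τ := by
      simp only [List.get_eq_getElem, hi₂, hR]
      rw [List.getElem_append_right (le_refl _)]
      simp
    have h12 : i₁ ≠ i₂ := by
      intro e
      have := congrArg Fin.val e
      simp only [hi₁, hi₂] at this
      exact absurd (this : k.1 = m.length) (Nat.ne_of_lt k.2)
    have hcount := partner_count hM hmsg hret h12 hv₁ hv₂
    rw [hR, List.count_append, hcm] at hcount
    have hz : ([τ] : List (S → S)).count (revOf τ) = 0 :=
      List.count_eq_zero.mpr (by simpa using hτne)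
    omega
  · obtain ⟨c, hc, hcY⟩ := hM.2.1 V (τ W) (fun e => hVY e.symm)
    obtain ⟨hrun1, hrun2⟩ := revMsg_run hM hc.1 hc.2.2.1
    rw [hcY] at hrun1 hrun2
    set R := m ++ ([τ] ++ revMsg c) with hR
    have hmsg : IsMsg T R := by
      intro x hx
      rcases List.mem_append.mp hx with hx | hx
      · exact hm.1 x hx
      · rcases List.mem_append.mp hx with hx | hx
        · simp at hx; exact hx ▸ hτT
        · exact revMsg_isMsg hM hc.1 x hx
    have hret : IsReturn R V := by
      constructor
      · rw [hR, stepwiseEff_append, ← hW, stepwiseEff_append]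
        refine ⟨hm.2.2.1, ⟨hY, trivial⟩, ?_⟩
        simpa using hrun1
      · rw [hR, mApply_append, ← hW, mApply_append]
        simpa using hrun2
    have hlen : R.length = m.length + (1 + (revMsg c).length) := by simp [hR]; omega
    set i₁ : Fin R.length := ⟨k.1, by rw [hlen]; have := k.2; omega⟩ with hi₁
    set i₂ : Fin R.length := ⟨m.length, by rw [hlen]; omega⟩ with hi₂
    have hv₁ : R.get i₁ = τ := by
      simp only [List.get_eq_getElem, hi₁, hR]
      rw [List.getElem_append_left k.2]
      simpa using hkval
    have hv₂ : R.get i₂ = τ := by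
      simp only [List.get_eq_getElem, hi₂, hR]
      rw [List.getElem_append_right (le_refl _)]
      simp
    have h12 : i₁ ≠ i₂ := by
      intro e
      have := congrArg Fin.val e
      simp only [hi₁, hi₂] at this
      exact absurd (this : k.1 = m.length) (Nat.ne_of_lt k.2)
    have hcount := partner_count hM hmsg hret h12 hv₁ hv₂
    have hle1 : (revMsg c).count (revOf τ) ≤ 1 :=
      List.nodup_iff_count_le_one.mp (revMsg_nodup hM hc.1 hc.2.2.2) _
    rw [hR, List.count_append, List.count_append, hcm] at hcount
    have hz : ([τ] : List (S → S)).count (revOf τ) = 0 :=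
      List.count_eq_zero.mpr (by simpa using hτne)
    rw [hz] at hcount
    omega

end MediaAux
namespace MediaAux

open List

variable {T : Set (S → S)}

/-- [S2] If `τ` is effective at both endpoints of a concise message, then its
reverse does not occur in the message. -/
theorem eff_rev_not_mem (hM : IsMedium T) {m : List (S → S)} {P : S} {τ : S → S}
    (hτT : τ ∈ T) (hP : τ P ≠ P) (hm : Concise T m P)
    (hX : τ (mApply m P) ≠ mApply m P) : revOf τ ∉ m := by
  classical
  intro hmem
  set X := mApply m P with hXdef
  have hτm : τ ∉ m := fun h => hX (mem_concise_fix hM hm h)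
  have hcm : m.count τ = 0 := List.count_eq_zero.mpr hτm
  have hτne : revOf τ ≠ τ := revOf_ne_self hM hτT
  have hQP : revOf τ (τ P) = P := revOf_apply hM hτT (Ne.symm hP) rfl
  have hQeff : revOf τ (τ P) ≠ τ P := by rw [hQP]; exact Ne.symm hP
  have hYX : revOf τ (τ X) = X := revOf_apply hM hτT (Ne.symm hX) rfl
  obtain ⟨k, hkval⟩ := List.mem_iff_get.mp hmem
  have hrr : revOf (revOf τ) = τ := revOf_revOf hM hτT
  by_cases hQY : τ P = τ X
  · set R := revOf τ :: (m ++ [τ]) with hR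
    have hmsg : IsMsg T R := by
      intro x hx
      rcases List.mem_cons.mp hx with hx | hx
      · exact hx ▸ revOf_mem hM hτT
      · rcases List.mem_append.mp hx with hx | hx
        · exact hm.1 x hx
        · simp at hx; exact hx ▸ hτT
    have hret : IsReturn R (τ P) := by
      constructor
      · rw [hR, stepwiseEff_cons, hQP, stepwiseEff_append, ← hXdef]
        exact ⟨Ne.symm hP, hm.2.2.1, hX, trivial⟩
      · rw [hR, mApply_cons, hQP, mApply_append, ← hXdef]
        simpa using hQY.symm
    have hlen : R.length = m.length + 2 := by simp [hR]
    set i₁ : Fin R.length := ⟨0, by omega⟩ with hi₁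
    set i₂ : Fin R.length := ⟨k.1 + 1, by rw [hlen]; have := k.2; omega⟩ with hi₂
    have hv₁ : R.get i₁ = revOf τ := rfl
    have hv₂ : R.get i₂ = revOf τ := by
      simp only [List.get_eq_getElem, hi₂, hR, List.getElem_cons_succ]
      rw [List.getElem_append_left k.2]
      simpa using hkval
    have h12 : i₁ ≠ i₂ := by
      intro e
      have := congrArg Fin.val e
      simp [hi₁, hi₂] at this
    have hcount := partner_count hM hmsg hret h12 hv₁ hv₂
    rw [hrr, hR] at hcount
    simp only [List.count_cons, List.count_append, List.count_nil, hcm] at hcount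
    simp [hτne] at hcount
  · obtain ⟨c, hc, hcY⟩ := hM.2.1 (τ P) (τ X) hQY
    obtain ⟨hrun1, hrun2⟩ := revMsg_run hM hc.1 hc.2.2.1
    rw [hcY] at hrun1 hrun2
    set R := revOf τ :: (m ++ ([τ] ++ revMsg c)) with hR
    have hmsg : IsMsg T R := by
      intro x hx
      rcases List.mem_cons.mp hx with hx | hx
      · exact hx ▸ revOf_mem hM hτT
      · rcases List.mem_append.mp hx with hx | hx
        · exact hm.1 x hx
        · rcases List.mem_append.mp hx with hx | hx
          · simp at hx; exact hx ▸ hτT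
          · exact revMsg_isMsg hM hc.1 x hx
    have hret : IsReturn R (τ P) := by
      constructor
      · rw [hR, stepwiseEff_cons, hQP, stepwiseEff_append, ← hXdef, stepwiseEff_append]
        refine ⟨Ne.symm hP, hm.2.2.1, ⟨hX, trivial⟩, ?_⟩
        simpa using hrun1
      · rw [hR, mApply_cons, hQP, mApply_append, ← hXdef, mApply_append]
        simpa using hrun2
    have hlen : R.length = m.length + 2 + (revMsg c).length := by simp [hR]; omega
    set i₁ : Fin R.length := ⟨0, by omega⟩ with hi₁
    set i₂ : Fin R.length := ⟨k.1 + 1, by rw [hlen]; have := k.2; omega⟩ with hi₂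
    have hv₁ : R.get i₁ = revOf τ := rfl
    have hv₂ : R.get i₂ = revOf τ := by
      simp only [List.get_eq_getElem, hi₂, hR, List.getElem_cons_succ]
      rw [List.getElem_append_left k.2]
      simpa using hkval
    have h12 : i₁ ≠ i₂ := by
      intro e
      have := congrArg Fin.val e
      simp [hi₁, hi₂] at this
    have hcount := partner_count hM hmsg hret h12 hv₁ hv₂
    rw [hrr, hR] at hcount
    have hz : (revMsg c).count τ = 0 := by
      rw [List.count_eq_zero]
      intro hτc
      obtain ⟨μ, hμ, hμτ⟩ := mem_revMsg.mp hτc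
      have : μ = revOf τ := by
        rw [← revOf_revOf hM (hc.1 μ hμ), hμτ]
      rw [this] at hμ
      have hfix := mem_concise_fix hM hc hμ
      rw [hcY, hYX] at hfix
      exact hX hfix.symm
    simp only [List.count_cons, List.count_append, List.count_nil, hcm, hz] at hcount
    simp [hτne] at hcount

end MediaAux
namespace MediaAux

open List

variable {T : Set (S → S)}

/-- [K] If `τ` is effective at `A` and the endpoint of a concise message from `A`
is one step farther from `τ A` than the message length, then neither `τ` nor its
reverse occurs in the message. -/
theorem dist_succ_not_mem (hM : IsMedium T) {m : List (S → S)} {A : S} {τ : S → S}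
    (hτT : τ ∈ T) (hA : τ A ≠ A) (hm : Concise T m A)
    (hd : (mediumGraph T).dist (τ A) (mApply m A) = m.length + 1) :
    τ ∉ m ∧ revOf τ ∉ m := by
  classical
  set X := mApply m A with hXdef
  have hBX : τ A ≠ X := by
    intro e
    rw [← e] at hd
    simp [SimpleGraph.dist_self] at hd
  obtain ⟨c', hc', hc'X⟩ := hM.2.1 (τ A) X hBX
  have hlen : c'.length = m.length + 1 := by
    have := concise_length hM hc'
    rw [hc'X, hd] at this
    exact this
  have hBA : revOf τ (τ A) = A := revOf_apply hM hτT (Ne.symm hA) rfl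
  have hsub : ∀ x ∈ c', x ∈ revOf τ :: m := by
    apply concise_subset_eff hM hc'
    · intro x hx
      rcases List.mem_cons.mp hx with hx | hx
      · exact hx ▸ revOf_mem hM hτT
      · exact hm.1 x hx
    · rw [stepwiseEff_cons, hBA]
      exact ⟨Ne.symm hA, hm.2.2.1⟩
    · rw [mApply_cons, hBA, ← hXdef, hc'X]
  have hfsub : c'.toFinset ⊆ insert (revOf τ) m.toFinset := by
    intro x hx
    rw [List.mem_toFinset] at hx
    rcases List.mem_cons.mp (hsub x hx) with hx' | hx'
    · exact hx' ▸ Finset.mem_insert_self _ _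
    · exact Finset.mem_insert_of_mem (List.mem_toFinset.mpr hx')
  have hcard1 : c'.toFinset.card = m.length + 1 := by
    rw [List.toFinset_card_of_nodup hc'.2.2.2, hlen]
  have hcard2 : (insert (revOf τ) m.toFinset).card ≤ m.length + 1 := by
    calc (insert (revOf τ) m.toFinset).card ≤ m.toFinset.card + 1 := Finset.card_insert_le _ _
    _ ≤ m.length + 1 := by
        have := List.toFinset_card_le m
        omega
  have heq : c'.toFinset = insert (revOf τ) m.toFinset :=
    Finset.eq_of_subset_of_card_le hfsub (by rw [hcard1]; exact hcard2)
  have hrevnm : revOf τ ∉ m := by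
    intro h
    have : insert (revOf τ) m.toFinset = m.toFinset :=
      Finset.insert_eq_self.mpr (List.mem_toFinset.mpr h)
    rw [this] at heq
    have := List.toFinset_card_of_nodup hm.2.2.2
    rw [heq] at hcard1
    omega
  refine ⟨?_, hrevnm⟩
  intro hτm
  have hτc' : τ ∈ c' := by
    rw [← List.mem_toFinset, heq]
    exact Finset.mem_insert_of_mem (List.mem_toFinset.mpr hτm)
  have hrevc' : revOf τ ∈ c' := by
    rw [← List.mem_toFinset, heq]
    exact Finset.mem_insert_self _ _
  exact hc'.2.1 τ hτc' (revOf τ) hrevc' (isReverse_revOf hM hτT)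

end MediaAux
namespace MediaAux

open List

variable {T : Set (S → S)}

theorem concise_append_tok (hM : IsMedium T) {m : List (S → S)} {P : S} {τ : S → S}
    (hm : Concise T m P) (hτT : τ ∈ T) (hτm : τ ∉ m) (hrm : revOf τ ∉ m)
    (heff : τ (mApply m P) ≠ mApply m P) :
    Concise T (m ++ [τ]) P ∧ mApply (m ++ [τ]) P = τ (mApply m P) := by
  have hrevuniq : ∀ a, IsReverse τ a → a = revOf τ :=
    fun a ha => (isReverse_unique (isReverse_revOf hM hτT) ha).symm ▸ rfl
  refine ⟨⟨?_, ?_, ?_, ?_⟩, by simp⟩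
  · intro x hx
    rcases List.mem_append.mp hx with hx | hx
    · exact hm.1 x hx
    · simp at hx; exact hx ▸ hτT
  · intro a ha b hb hrev
    rcases List.mem_append.mp ha with ha | ha <;> rcases List.mem_append.mp hb with hb | hb
    · exact hm.2.1 a ha b hb hrev
    · simp at hb
      rw [hb] at hrev
      have h' : revOf τ = a := isReverse_unique (isReverse_revOf hM hτT) (isReverse_symm hrev)
      rw [← h'] at ha
      exact hrm ha
    · simp at ha
      rw [ha] at hrev
      have h' : revOf τ = b := isReverse_unique (isReverse_revOf hM hτT) hrev
      rw [← h'] at hb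
      exact hrm hb
    · simp at ha hb
      rw [ha, hb] at hrev
      exact not_self_reverse hM hτT hrev
  · rw [stepwiseEff_append]
    exact ⟨hm.2.2.1, heff, trivial⟩
  · rw [List.nodup_append]
    exact ⟨hm.2.2.2, List.nodup_singleton τ, fun a ha b hb hab => hτm (by simp at hb; subst hb; subst hab; exact ha)⟩

theorem concise_cons_rev (hM : IsMedium T) {m : List (S → S)} {P : S} {τ : S → S}
    (hm : Concise T m P) (hτT : τ ∈ T) (hP : τ P ≠ P) (hτm : τ ∉ m) (hrm : revOf τ ∉ m) :
    Concise T (revOf τ :: m) (τ P) ∧ mApply (revOf τ :: m) (τ P) = mApply m P := by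
  have hrT : revOf τ ∈ T := revOf_mem hM hτT
  have hback : revOf τ (τ P) = P := revOf_apply hM hτT (Ne.symm hP) rfl
  refine ⟨⟨?_, ?_, ?_, ?_⟩, by rw [mApply_cons, hback]⟩
  · intro x hx
    rcases List.mem_cons.mp hx with hx | hx
    · exact hx ▸ hrT
    · exact hm.1 x hx
  · intro a ha b hb hrev
    rcases List.mem_cons.mp ha with ha | ha <;> rcases List.mem_cons.mp hb with hb | hb
    · rw [ha, hb] at hrev
      exact not_self_reverse hM hrT hrev
    · rw [ha] at hrev
      have h' : revOf (revOf τ) = b := isReverse_unique (isReverse_revOf hM hrT) hrev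
      rw [revOf_revOf hM hτT] at h'
      rw [← h'] at hb
      exact hτm hb
    · rw [hb] at hrev
      have h' : revOf (revOf τ) = a :=
        isReverse_unique (isReverse_revOf hM hrT) (isReverse_symm hrev)
      rw [revOf_revOf hM hτT] at h'
      rw [← h'] at ha
      exact hτm ha
    · exact hm.2.1 a ha b hb hrev
  · rw [stepwiseEff_cons, hback]
    exact ⟨Ne.symm hP, hm.2.2.1⟩
  · exact List.nodup_cons.mpr ⟨hrm, hm.2.2.2⟩

/-- Parallelism, forward direction: an effective token produces the `Like`
distance pattern between any two of its arcs. -/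
theorem like_distances (hM : IsMedium T) {τ : S → S} {P X : S}
    (hτT : τ ∈ T) (hP : τ P ≠ P) (hX : τ X ≠ X) :
    (mediumGraph T).dist P X = (mediumGraph T).dist (τ P) (τ X) ∧
    (mediumGraph T).dist P (τ X) = (mediumGraph T).dist P X + 1 ∧
    (mediumGraph T).dist (τ P) X = (mediumGraph T).dist P X + 1 := by
  classical
  have hconn := medium_connected hM
  by_cases hPX : P = X
  · subst hPX
    refine ⟨by rw [SimpleGraph.dist_self, SimpleGraph.dist_self], ?_, ?_⟩
    · rw [SimpleGraph.dist_self, SimpleGraph.dist_eq_one_iff_adj]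
      exact adj_eff hM hτT hP
    · rw [SimpleGraph.dist_self, SimpleGraph.dist_comm, SimpleGraph.dist_eq_one_iff_adj]
      exact adj_eff hM hτT hP
  · obtain ⟨m, hm, hmX⟩ := hM.2.1 P X hPX
    set n := m.length with hn
    have hnd : n = (mediumGraph T).dist P X := by
      have := concise_length hM hm; rwa [hmX] at this
    have hτm : τ ∉ m := fun h => hX (by have := mem_concise_fix hM hm h; rwa [hmX] at this)
    have hrm : revOf τ ∉ m := by
      have := eff_rev_not_mem hM hτT hP hm (by rw [hmX]; exact hX)
      exact this
    obtain ⟨hap, hapY⟩ := concise_append_tok hM hm hτT hτm hrm (by rw [hmX]; exact hX)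
    have hPY : (mediumGraph T).dist P (τ X) = n + 1 := by
      have := concise_length hM hap
      rw [hapY, hmX] at this
      simp only [List.length_append, List.length_cons, List.length_nil] at this
      omega
    obtain ⟨hcons, hconsX⟩ := concise_cons_rev hM hm hτT hP hτm hrm
    have hQX : (mediumGraph T).dist (τ P) X = n + 1 := by
      have := concise_length hM hcons
      rw [hconsX, hmX] at this
      simp only [List.length_cons] at this
      omega
    have hback : revOf τ (τ P) = P := revOf_apply hM hτT (Ne.symm hP) rfl
    have hQYge : n ≤ (mediumGraph T).dist (τ P) (τ X) := by
      have htri := hconn.dist_triangle (u := P) (v := τ P) (w := τ X)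
      have hPQ : (mediumGraph T).dist P (τ P) = 1 :=
        SimpleGraph.dist_eq_one_iff_adj.mpr (adj_eff hM hτT hP)
      omega
    have hQYle : (mediumGraph T).dist (τ P) (τ X) ≤ n := by
      obtain ⟨c, hc, hcY⟩ := concise_exists hM (τ P) (τ X)
      have hclen : c.length = (mediumGraph T).dist (τ P) (τ X) := by
        have := concise_length hM hc; rwa [hcY] at this
      -- the witness message τ̃ :: (m ++ [τ]) from τ P to τ X
      have hwmsg : IsMsg T (revOf τ :: (m ++ [τ])) := by
        intro x hx
        rcases List.mem_cons.mp hx with hx | hx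
        · exact hx ▸ revOf_mem hM hτT
        · exact hap.1 x hx
      have hweff : StepwiseEff (revOf τ :: (m ++ [τ])) (τ P) := by
        rw [stepwiseEff_cons, hback]
        exact ⟨Ne.symm hP, hap.2.2.1⟩
      have hwap : mApply (revOf τ :: (m ++ [τ])) (τ P) = mApply c (τ P) := by
        rw [mApply_cons, hback, hapY, hmX, hcY]
      have hsub : ∀ x ∈ c, x ∈ revOf τ :: (m ++ [τ]) :=
        concise_subset_eff hM hc hwmsg hweff hwap
      have hτc : τ ∉ c := by
        intro hτc
        have hrc : Concise T (revMsg c) (mApply c (τ P)) := revMsg_concise hM hc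
        rw [hcY] at hrc
        have hmem : revOf τ ∈ revMsg c := mem_revMsg.mpr ⟨τ, hτc, rfl⟩
        have hfix := mem_concise_fix hM hrc hmem
        have hrun := (revMsg_run hM hc.1 hc.2.2.1).2
        rw [hcY] at hrun
        rw [hrun, hback] at hfix
        exact hP hfix.symm
      have hrc : revOf τ ∉ c := by
        intro hrc
        have hfix := mem_concise_fix hM hc hrc
        rw [hcY] at hfix
        have : revOf τ (τ X) = X := revOf_apply hM hτT (Ne.symm hX) rfl
        rw [this] at hfix
        exact hX hfix.symm
      have hsubm : ∀ x ∈ c, x ∈ m := by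
        intro x hx
        rcases List.mem_cons.mp (hsub x hx) with hx' | hx'
        · exact absurd (hx' ▸ hx) hrc
        · rcases List.mem_append.mp hx' with hx' | hx'
          · exact hx'
          · simp at hx'; exact absurd (hx' ▸ hx) hτc
      have : c.length ≤ n := by
        calc c.length = c.toFinset.card := (List.toFinset_card_of_nodup hc.2.2.2).symm
        _ ≤ m.toFinset.card := Finset.card_le_card (by
            intro x hx
            rw [List.mem_toFinset] at hx ⊢
            exact hsubm x hx)
        _ ≤ m.length := List.toFinset_card_le m
      omega
    refine ⟨by omega, by omega, by omega⟩

/-- Parallelism, converse direction: the `Like` distance pattern forces the arc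
`(X, Y)` to carry the token `τ`. -/
theorem token_of_like (hM : IsMedium T) {τ : S → S} {P X Y : S}
    (hτT : τ ∈ T) (hP : τ P ≠ P) (hA : (mediumGraph T).Adj X Y)
    (h1 : (mediumGraph T).dist P X = (mediumGraph T).dist (τ P) Y)
    (h2 : (mediumGraph T).dist P Y = (mediumGraph T).dist P X + 1)
    (h3 : (mediumGraph T).dist (τ P) X = (mediumGraph T).dist P X + 1) :
    τ X = Y := by
  classical
  have hconn := medium_connected hM
  obtain ⟨ρ, hρT, hρX⟩ := arc_token hM hA
  have hXY : X ≠ Y := hA.ne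
  by_cases hPX : P = X
  · subst hPX
    rw [SimpleGraph.dist_self] at h1
    exact (hconn.dist_eq_zero_iff.mp h1.symm)
  · obtain ⟨m, hm, hmX⟩ := hM.2.1 P X hPX
    set n := m.length with hn
    have hnd : n = (mediumGraph T).dist P X := by
      have := concise_length hM hm; rwa [hmX] at this
    have hQY : τ P ≠ Y := by
      intro e
      rw [e, SimpleGraph.dist_self] at h1
      exact hPX (hconn.dist_eq_zero_iff.mp h1)
    obtain ⟨c, hc, hcY⟩ := hM.2.1 (τ P) Y hQY
    have hclen : c.length = n := by
      have := concise_length hM hc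
      rw [hcY, ← h1, ← hnd] at this
      omega
    have hρback : revOf ρ Y = X := revOf_apply hM hρT hXY hρX
    have hback : revOf τ (τ P) = P := revOf_apply hM hτT (Ne.symm hP) rfl
    obtain ⟨hrun1, hrun2⟩ := revMsg_run hM hm.1 hm.2.2.1
    rw [hmX] at hrun1 hrun2
    set R := τ :: (c ++ ([revOf ρ] ++ revMsg m)) with hR
    have hmsg : IsMsg T R := by
      intro x hx
      rcases List.mem_cons.mp hx with hx | hx
      · exact hx ▸ hτT
      · rcases List.mem_append.mp hx with hx | hx
        · exact hc.1 x hx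
        · rcases List.mem_append.mp hx with hx | hx
          · simp at hx; exact hx ▸ revOf_mem hM hρT
          · exact revMsg_isMsg hM hm.1 x hx
    have hret : IsReturn R P := by
      constructor
      · rw [hR, stepwiseEff_cons, stepwiseEff_append, hcY, stepwiseEff_append]
        refine ⟨hP, hc.2.2.1, ⟨?_, trivial⟩, ?_⟩
        · rw [hρback]; exact hXY
        · simp only [mApply_cons, mApply_nil, hρback]
          exact hrun1
      · rw [hR, mApply_cons, mApply_append, hcY, mApply_append]
        simp only [mApply_cons, mApply_nil, hρback]
        exact hrun2
    obtain ⟨σ, hσne, -, hrev⟩ := hM.2.2 R P hmsg hret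
    have hpos : 0 < R.length := by simp [hR]
    set i0 : Fin R.length := ⟨0, hpos⟩ with hi0
    have hv0 : R.get i0 = τ := rfl
    have hpart := hrev i0
    rw [hv0] at hpart
    have hvp : R.get (σ i0) = revOf τ := (revOf_eq hpart).symm
    have hmemR : revOf τ ∈ R := by
      rw [← hvp]; exact List.mem_iff_get.mpr ⟨σ i0, rfl⟩
    rcases List.mem_cons.mp hmemR with hx | hx
    · exact absurd hx (revOf_ne_self hM hτT)
    rcases List.mem_append.mp hx with hx | hx
    · -- revOf τ ∈ c : impossible by K
      exfalso
      have hK := dist_succ_not_mem hM (revOf_mem hM hτT)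
        (by rw [hback]; exact Ne.symm hP : revOf τ (τ P) ≠ τ P) hc
        (by rw [hback, hcY, hclen, h2, ← hnd])
      exact hK.1 hx
    rcases List.mem_append.mp hx with hx | hx
    · -- revOf τ = revOf ρ, hence τ = ρ
      simp at hx
      have : τ = ρ := revOf_inj hM hτT hρT hx
      rw [this]; exact hρX
    · -- revOf τ ∈ revMsg m : then τ ∈ m, impossible by K
      exfalso
      obtain ⟨μ, hμ, hμr⟩ := mem_revMsg.mp hx
      have hμτ : μ = τ := revOf_inj hM (hm.1 μ hμ) hτT hμr
      have hτm : τ ∈ m := hμτ ▸ hμ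
      have hK := dist_succ_not_mem hM hτT hP hm
        (by rw [hmX, h3, ← hnd])
      exact hK.1 hτm

end MediaAux
namespace MediaAux

open List

theorem dist_le_map {S' : Type*} {G : SimpleGraph S} {G' : SimpleGraph S'}
    (hG : G.Connected) (f : G →g G') (a b : S) :
    G'.dist (f a) (f b) ≤ G.dist a b := by
  obtain ⟨w, hw⟩ := hG.exists_walk_length_eq_dist a b
  have := SimpleGraph.dist_le (w.map f)
  rwa [SimpleGraph.Walk.length_map, hw] at this

/-- Conjugation by a graph isomorphism carries tokens to tokens. -/
theorem conj_mem {S' : Type*} {T : Set (S → S)} {T' : Set (S' → S')}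
    (hM : IsMedium T) (hM' : IsMedium T') (φ : S ≃ S')
    (hφ : ∀ P Q : S, (mediumGraph T).Adj P Q ↔ (mediumGraph T').Adj (φ P) (φ Q))
    (τ : S → S) (hτ : τ ∈ T) : (fun s => φ (τ (φ.symm s))) ∈ T' := by
  classical
  have hconn := medium_connected hM
  have hconn' := medium_connected hM'
  let iso : (mediumGraph T) ≃g (mediumGraph T') :=
    { toEquiv := φ, map_rel_iff' := by intro a b; exact (hφ _ _).symm }
  have hdist : ∀ a b : S, (mediumGraph T').dist (φ a) (φ b) = (mediumGraph T).dist a b := by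
    intro a b
    refine le_antisymm (dist_le_map hconn iso.toHom a b) ?_
    have := dist_le_map hconn' iso.symm.toHom (φ a) (φ b)
    have h1 : iso.symm.toHom (φ a) = a := φ.symm_apply_apply a
    have h2 : iso.symm.toHom (φ b) = b := φ.symm_apply_apply b
    rwa [h1, h2] at this
  obtain ⟨P₀, hP₀⟩ := exists_ne hM hτ
  have hadj : (mediumGraph T').Adj (φ P₀) (φ (τ P₀)) := (hφ _ _).mp (adj_eff hM hτ hP₀)
  obtain ⟨μ, hμT, hμP⟩ := arc_token hM' hadj
  suffices h : ∀ X, μ (φ X) = φ (τ X) by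
    have heq : (fun s => φ (τ (φ.symm s))) = μ := by
      funext s
      have hs := h (φ.symm s)
      rw [φ.apply_symm_apply] at hs
      exact hs.symm
    rw [heq]; exact hμT
  intro X
  have hμeff : μ (φ P₀) ≠ φ P₀ := by
    rw [hμP]; exact fun e => hP₀ (φ.injective e)
  by_cases hXf : τ X = X
  · rw [hXf]
    by_contra hne
    have h5 := like_distances hM' hμT hμeff hne
    have hY : μ (φ X) = φ (φ.symm (μ (φ X))) := (φ.apply_symm_apply _).symm
    set Y := φ.symm (μ (φ X)) with hYdef
    have hAdjXY : (mediumGraph T).Adj X Y := by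
      have ha := adj_eff hM' hμT hne
      rw [hY] at ha
      exact (hφ X Y).mpr ha
    have d1 : (mediumGraph T).dist P₀ X = (mediumGraph T).dist (τ P₀) Y := by
      have h' := h5.1
      rw [hμP, hY, hdist, hdist] at h'
      exact h'
    have d2 : (mediumGraph T).dist P₀ Y = (mediumGraph T).dist P₀ X + 1 := by
      have h' := h5.2.1
      rw [hY, hdist, hdist] at h'
      exact h'
    have d3 : (mediumGraph T).dist (τ P₀) X = (mediumGraph T).dist P₀ X + 1 := by
      have h' := h5.2.2
      rw [hμP, hdist, hdist] at h'
      exact h'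
    have htok := token_of_like hM hτ hP₀ hAdjXY d1 d2 d3
    rw [hXf] at htok
    exact hAdjXY.ne htok
  · have h5 := like_distances hM hτ hP₀ hXf
    have hAdj' : (mediumGraph T').Adj (φ X) (φ (τ X)) := (hφ _ _).mp (adj_eff hM hτ hXf)
    refine token_of_like hM' hμT hμeff hAdj' ?_ ?_ ?_
    · rw [hμP, hdist, hdist]; exact h5.1
    · rw [hdist, hdist]; exact h5.2.1
    · rw [hμP, hdist, hdist]; exact h5.2.2

end MediaAux
/-- A graph isomorphism between the graphs of two media lifts to an isomorphism
of the media themselves. -/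
theorem stmt19 {S' : Type*} {T : Set (S → S)} {T' : Set (S' → S')}
    (hM : IsMedium T) (hM' : IsMedium T')
    (φ : S ≃ S')
    (hφ : ∀ P Q : S, (mediumGraph T).Adj P Q ↔ (mediumGraph T').Adj (φ P) (φ Q)) :
    ∃ β : T ≃ T', ∀ (P Q : S) (τ : S → S) (hτ : τ ∈ T),
      τ P = Q ↔ (β ⟨τ, hτ⟩ : S' → S') (φ P) = φ Q := by
  classical
  have hmem : ∀ τ : S → S, τ ∈ T → (fun s => φ (τ (φ.symm s))) ∈ T' :=
    MediaAux.conj_mem hM hM' φ hφ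
  have hφ' : ∀ P Q : S', (mediumGraph T').Adj P Q ↔
      (mediumGraph T).Adj (φ.symm P) (φ.symm Q) := by
    intro P Q
    have h := hφ (φ.symm P) (φ.symm Q)
    rw [φ.apply_symm_apply, φ.apply_symm_apply] at h
    exact h.symm
  have hmem' : ∀ μ : S' → S', μ ∈ T' → (fun s => φ.symm (μ (φ s))) ∈ T := by
    intro μ hμ
    have := MediaAux.conj_mem hM' hM φ.symm hφ' μ hμ
    simpa using this
  refine ⟨{ toFun := fun t => ⟨fun s => φ (t.1 (φ.symm s)), hmem t.1 t.2⟩,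
            invFun := fun t => ⟨fun s => φ.symm (t.1 (φ s)), hmem' t.1 t.2⟩,
            left_inv := ?_, right_inv := ?_ }, ?_⟩
  · intro t
    apply Subtype.ext
    funext s
    simp
  · intro t
    apply Subtype.ext
    funext s
    simp
  · intro P Q τ hτ
    simp only [Equiv.coe_fn_mk]
    constructor
    · intro h
      rw [φ.symm_apply_apply, h]
    · intro h
      rw [φ.symm_apply_apply] at h
      exact φ.injective h
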